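/- Let a₀, R₀ > 0 and define, for t ∈ [0, ∞), a(t) = a₀ (1 + 6t/(a₀R₀³))^{−1/2} and R(t) = R₀ (1 + 6t/(a₀R₀³))^{1/2}. Then a(0) = a₀, R(0) = R₀, and for all t ≥ 0: a′(t) = −3/R(t)³ and R′(t) = 3/(R(t)² a(t)). Moreover a is strictly decreasing with a(t) → 0 as t → ∞, and R is strictly increasing with R(t) → +∞ as t → ∞. -/

import Mathlib

/-- Explicit solution of the fourth-order total variation flow emanating from
`a₀ 1_{B_{R₀}}` in dimension `n = 1`: `a(t) = a₀(1+6t/(a₀R₀³))^{−1/2}`,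
`R(t) = R₀(1+6t/(a₀R₀³))^{1/2}`, their ODEs and asymptotic behavior.
Here `x ^ y` with real exponent is `Real.rpow`. -/
theorem stmt_14 (a0 R0 : ℝ) (ha0 : 0 < a0) (hR0 : 0 < R0)
    (a R : ℝ → ℝ)
    (ha : a = fun t => a0 * (1 + 6 * t / (a0 * R0 ^ 3)) ^ (-(1 / 2) : ℝ))
    (hR : R = fun t => R0 * (1 + 6 * t / (a0 * R0 ^ 3)) ^ ((1 / 2) : ℝ)) :
    a 0 = a0 ∧ R 0 = R0 ∧
    (∀ t : ℝ, 0 ≤ t →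
      HasDerivAt a (-3 / R t ^ 3) t ∧ HasDerivAt R (3 / (R t ^ 2 * a t)) t) ∧
    StrictAntiOn a (Set.Ici 0) ∧ Filter.Tendsto a Filter.atTop (nhds 0) ∧
    StrictMonoOn R (Set.Ici 0) ∧ Filter.Tendsto R Filter.atTop Filter.atTop := by
  have ha0' := ha0.ne'
  have hR0' := hR0.ne'
  have hX : 0 < a0 * R0 ^ 3 := by positivity
  set g : ℝ → ℝ := fun t => 1 + 6 * t / (a0 * R0 ^ 3) with hg
  have hgpos : ∀ t : ℝ, 0 ≤ t → 0 < g t := by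
    intro t ht
    have : 0 ≤ 6 * t / (a0 * R0 ^ 3) := by positivity
    simp only [hg]; linarith
  have hgd : ∀ t : ℝ, HasDerivAt g (6 / (a0 * R0 ^ 3)) t := by
    intro t
    simpa [hg] using (((hasDerivAt_id t).const_mul 6).div_const (a0 * R0 ^ 3)).const_add 1
  have hgmono : ∀ s t : ℝ, s < t → g s < g t := by
    intro s t hst
    simp only [hg]
    gcongr
  have hgtop : Filter.Tendsto g Filter.atTop Filter.atTop := by
    simp only [hg]
    apply Filter.tendsto_atTop_add_const_left
    exact (Filter.tendsto_id.const_mul_atTop (by norm_num)).atTop_div_const hX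
  refine ⟨?_, ?_, ?_, ?_, ?_, ?_, ?_⟩
  · simp [ha]
  · simp [hR]
  · intro t ht
    have hGpos := hgpos t ht
    have hGne := hGpos.ne'
    have hG32 : (0:ℝ) < g t ^ ((3:ℝ)/2) := Real.rpow_pos_of_pos hGpos _
    have hG12 : (0:ℝ) < g t ^ ((1:ℝ)/2) := Real.rpow_pos_of_pos hGpos _
    have hRcube : R t ^ 3 = R0 ^ 3 * g t ^ ((3:ℝ)/2) := by
      rw [hR]
      simp only
      have : (R0 * g t ^ ((1:ℝ)/2)) ^ 3
          = R0 ^ 3 * (g t ^ ((1:ℝ)/2) * g t ^ ((1:ℝ)/2) * g t ^ ((1:ℝ)/2)) := by ring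
      rw [this, ← Real.rpow_add hGpos, ← Real.rpow_add hGpos]
      norm_num
    have hRsq : R t ^ 2 * a t = a0 * R0 ^ 2 * g t ^ ((1:ℝ)/2) := by
      rw [hR, ha]
      simp only
      have : (R0 * g t ^ ((1:ℝ)/2)) ^ 2 * (a0 * g t ^ (-(1/2):ℝ))
          = a0 * R0 ^ 2 * (g t ^ ((1:ℝ)/2) * g t ^ ((1:ℝ)/2) * g t ^ (-(1/2):ℝ)) := by ring
      rw [this, ← Real.rpow_add hGpos, ← Real.rpow_add hGpos]
      norm_num
    constructor
    · have h1 : HasDerivAt a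
          (a0 * (6 / (a0 * R0 ^ 3) * (-(1/2)) * g t ^ (-(1/2 : ℝ) - 1))) t := by
        rw [ha]
        exact (((hgd t).rpow_const (Or.inl hGne)).const_mul a0)
      convert h1 using 1
      rw [hRcube]
      have : g t ^ (-(1/2 : ℝ) - 1) = (g t ^ ((3:ℝ)/2))⁻¹ := by
        rw [← Real.rpow_neg hGpos.le]
        norm_num
      rw [this]
      field_simp
      ring
    · have h1 : HasDerivAt R
          (R0 * (6 / (a0 * R0 ^ 3) * (1/2) * g t ^ ((1/2 : ℝ) - 1))) t := by
        rw [hR]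
        exact (((hgd t).rpow_const (Or.inl hGne)).const_mul R0)
      convert h1 using 1
      rw [hRsq]
      have : g t ^ ((1/2 : ℝ) - 1) = (g t ^ ((1:ℝ)/2))⁻¹ := by
        rw [← Real.rpow_neg hGpos.le]
        norm_num
      rw [this]
      field_simp
      ring
  · intro s hs t ht hst
    rw [ha]
    simp only
    have := Real.rpow_lt_rpow_of_neg (hgpos s hs) (hgmono s t hst) (by norm_num : (-(1/2):ℝ) < 0)
    exact mul_lt_mul_of_pos_left this ha0
  · rw [ha]
    have := (tendsto_rpow_neg_atTop (by norm_num : (0:ℝ) < 1/2)).comp hgtop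
    simpa using this.const_mul a0
  · intro s hs t ht hst
    rw [hR]
    simp only
    have := Real.rpow_lt_rpow (hgpos s hs).le (hgmono s t hst) (by norm_num : (0:ℝ) < 1/2)
    exact mul_lt_mul_of_pos_left this hR0
  · rw [hR]
    exact ((tendsto_rpow_atTop (by norm_num : (0:ℝ) < 1/2)).comp hgtop).const_mul_atTop hR0
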